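/- The odd-even transposition sorting network on n wires sorts every input: applying n alternating rounds — odd rounds conditionally swapping positions (2j-1, 2j) and even rounds conditionally swapping positions (2j, 2j+1), where each conditional swap exchanges two adjacent entries if they are out of order — transforms any list of n distinct values into sorted order. -/
import Mathlib


/-- One round of the odd–even transposition network on positions `0, …, n-1`:
for each `i` with `i % 2 = t % 2` and `i + 1 < n`, conditionally swap
positions `i` and `i + 1` (placing the min at `i` and the max at `i + 1`). -/
def oeStep {α : Type*} [LinearOrder α] (n t : ℕ) (v : ℕ → α) : ℕ → α := fun i =>
  if i % 2 = t % 2 then (if i + 1 < n then min (v i) (v (i + 1)) else v i)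
  else if 1 ≤ i ∧ i < n then max (v (i - 1)) (v i) else v i

/-- Apply the first `t` rounds of the odd–even transposition network. -/
def oeRun {α : Type*} [LinearOrder α] (n : ℕ) : ℕ → (ℕ → α) → ℕ → α
  | 0, v => v
  | t + 1, v => oeStep n t (oeRun n t v)

/-- A conditional swap (comparator) on adjacent positions `i` and `i + 1`. -/
def cswap {α : Type*} [LinearOrder α] (i : ℕ) (v : ℕ → α) : ℕ → α := fun j =>
  if j = i then min (v i) (v (i + 1))
  else if j = i + 1 then max (v i) (v (i + 1))
  else v j

/-- Run a comparator network, given as the list of its comparator positions. -/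
def runNet {α : Type*} [LinearOrder α] (L : List ℕ) (v : ℕ → α) : ℕ → α :=
  L.foldl (fun w i => cswap i w) v

/-- The input sequence corresponding to a permutation of `{0, …, n-1}`. -/
def permInput (n : ℕ) (σ : Equiv.Perm (Fin n)) : ℕ → ℕ :=
  fun j => if h : j < n then (σ ⟨j, h⟩ : ℕ) else j


namespace OEAux

/-- count of `false` values in the prefix of length `p` -/
def cnt (u : ℕ → Bool) : ℕ → ℕ
  | 0 => 0
  | p + 1 => cnt u p + (if u p = false then 1 else 0)

lemma cnt_le (u : ℕ → Bool) : ∀ p, cnt u p ≤ p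
  | 0 => le_refl 0
  | p + 1 => by have := cnt_le u p; simp only [cnt]; split <;> omega

lemma cnt_eq_iff (u : ℕ → Bool) : ∀ p, cnt u p = p ↔ ∀ i < p, u i = false
  | 0 => by simp [cnt]
  | p + 1 => by
    have h1 := cnt_le u p
    have h2 := cnt_eq_iff u p
    simp only [cnt]
    constructor
    · intro h i hi
      by_cases hup : u p = false
      · rw [if_pos hup] at h
        rcases Nat.lt_succ_iff_lt_or_eq.mp hi with h' | h'
        · exact (h2.mp (by omega)) i h'
        · subst h'; exact hup
      · rw [if_neg hup] at h; omega
    · intro h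
      have hup : u p = false := h p (Nat.lt_succ_self p)
      rw [if_pos hup, h2.mpr fun i hi => h i (hi.trans (Nat.lt_succ_self p))]

lemma cnt_oeStep (n t : ℕ) (w : ℕ → Bool) :
    ∀ p, p % 2 = t % 2 → cnt (oeStep n t w) p = cnt w p
  | 0, _ => rfl
  | 1, h => by
    have h0 : (0 : ℕ) % 2 ≠ t % 2 := by omega
    have e : oeStep n t w 0 = w 0 := by simp [oeStep, h0]
    simp [cnt, e]
  | (p + 2), h => by
    have hp : p % 2 = t % 2 := by omega
    have ih := cnt_oeStep n t w p hp
    have hp1 : ¬ ((p + 1) % 2 = t % 2) := by omega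
    by_cases hn : p + 1 < n
    · have e1 : oeStep n t w p = min (w p) (w (p + 1)) := by simp [oeStep, hp, hn]
      have e2 : oeStep n t w (p + 1) = max (w p) (w (p + 1)) := by
        simp [oeStep, hp1, hn]
      simp only [cnt, e1, e2, ih]
      cases hw : w p <;> cases hw2 : w (p + 1) <;> simp [min_def, max_def]
    · have e1 : oeStep n t w p = w p := by simp [oeStep, hp, hn]
      have e2 : oeStep n t w (p + 1) = w (p + 1) := by
        have hc : ¬ (1 ≤ p + 1 ∧ p + 1 < n) := by omega
        simp only [oeStep]
        rw [if_neg hp1, if_neg hc]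
      simp [cnt, e1, e2, ih]

lemma allFalse_oeStep (n t p : ℕ) (w : ℕ → Bool) (h : ∀ i < p, w i = false) :
    ∀ i < p, oeStep n t w i = false := by
  intro i hi
  have hwi := h i hi
  by_cases hpar : i % 2 = t % 2
  · by_cases hn : i + 1 < n
    · have e : oeStep n t w i = min (w i) (w (i + 1)) := by simp [oeStep, hpar, hn]
      rw [e, hwi]
      cases w (i + 1) <;> decide
    · simp [oeStep, hpar, hn, hwi]
  · by_cases hc : 1 ≤ i ∧ i < n
    · have e : oeStep n t w i = max (w (i - 1)) (w i) := by simp [oeStep, hpar, hc]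
      rw [e, hwi, h (i - 1) (by omega)]
      decide
    · simp [oeStep, hpar, hc, hwi]

end OEAux

namespace OEAux

lemma oe_inv (n : ℕ) (w : ℕ → Bool) :
    ∀ t, ∀ p < n, oeRun n t w p = false →
      (∀ i < p, oeRun n t w i = false) ∨
        (p + t ≤ n + cnt (oeRun n t w) p ∧
          (cnt (oeRun n t w) p + 1 ≤ t → p % 2 ≠ t % 2)) := by
  intro t
  induction t with
  | zero =>
    intro p hp _
    right
    exact ⟨by omega, by omega⟩
  | succ t ih =>
    intro p hp hfalse
    have hrun : oeRun n (t + 1) w = oeStep n t (oeRun n t w) := rfl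
    rw [hrun] at hfalse ⊢
    set W := oeRun n t w with hWdef
    by_cases hpar : p % 2 = t % 2
    · -- case A : comparator (p, p+1)
      have hcnt : cnt (oeStep n t W) p = cnt W p := cnt_oeStep n t W p hpar
      by_cases hWp : W p = false
      · rcases ih p hp hWp with h1 | ⟨hb, hparity⟩
        · exact Or.inl (allFalse_oeStep n t p W h1)
        · right
          have ht : t ≤ cnt W p := by
            by_contra h'
            exact (hparity (by omega)) hpar
          exact ⟨by rw [hcnt]; omega, fun _ => by omega⟩
      · have hWp' : W p = true := by
          cases h' : W p
          · exact absurd h' hWp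
          · rfl
        by_cases hn1 : p + 1 < n
        · have e : oeStep n t W p = min (W p) (W (p + 1)) := by simp [oeStep, hpar, hn1]
          rw [e, hWp'] at hfalse
          have hWp1 : W (p + 1) = false := by
            cases h' : W (p + 1)
            · rfl
            · rw [h'] at hfalse; exact absurd hfalse (by decide)
          rcases ih (p + 1) hn1 hWp1 with h1 | ⟨hb, _⟩
          · have := h1 p (Nat.lt_succ_self p)
            rw [hWp'] at this
            exact absurd this (by decide)
          · right
            have hc1 : cnt W (p + 1) = cnt W p := by simp [cnt, hWp']
            exact ⟨by rw [hcnt]; omega, fun _ => by omega⟩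
        · have e : oeStep n t W p = W p := by simp [oeStep, hpar, hn1]
          rw [e, hWp'] at hfalse
          exact absurd hfalse (by decide)
    · -- case B : p is the max-slot of comparator (p-1, p)
      rcases Nat.eq_zero_or_pos p with rfl | hppos
      · exact Or.inl (by intro i hi; omega)
      · have hcond : 1 ≤ p ∧ p < n := ⟨hppos, hp⟩
        have e : oeStep n t W p = max (W (p - 1)) (W p) := by simp [oeStep, hpar, hcond]
        rw [e] at hfalse
        have hWpm : W (p - 1) = false := by
          cases h' : W (p - 1)
          · rfl
          · rw [h'] at hfalse
            cases h'' : W p <;> rw [h''] at hfalse <;> exact absurd hfalse (by decide)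
        have hWp : W p = false := by
          cases h'' : W p
          · rfl
          · rw [h'', hWpm] at hfalse; exact absurd hfalse (by decide)
        have hparm : (p - 1) % 2 = t % 2 := by omega
        have hrewp : p = (p - 1) + 1 := by omega
        rcases ih (p - 1) (by omega) hWpm with h1 | ⟨hb, hparity⟩
        · left
          apply allFalse_oeStep
          intro i hi
          rcases Nat.lt_or_ge i (p - 1) with h' | h'
          · exact h1 i h'
          · have hieq : i = p - 1 := by omega
            rw [hieq]; exact hWpm
        · right
          have ht : t ≤ cnt W (p - 1) := by
            by_contra h'
            exact (hparity (by omega)) hparm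
          have hcntW : cnt W p = cnt W (p - 1) + 1 := by
            rw [hrewp]
            simp [cnt, hWpm]
          have hstep_pm : oeStep n t W (p - 1) = false := by
            have h2 : (p - 1) + 1 < n := by omega
            have e2 : oeStep n t W (p - 1) = min (W (p - 1)) (W ((p - 1) + 1)) := by
              simp [oeStep, hparm, h2]
            rw [e2, hWpm]
            cases W ((p - 1) + 1) <;> decide
          have hcnt' : cnt (oeStep n t W) p = cnt W p := by
            rw [hrewp]
            simp only [cnt, cnt_oeStep n t W (p - 1) hparm, hstep_pm, hWpm]
          constructor
          · rw [hcnt']; omega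
          · rw [hcnt']; omega

end OEAux

namespace OEAux

lemma oe_sorted_bool (n : ℕ) (w : ℕ → Bool) :
    ∀ i j, i < j → j < n → oeRun n n w i ≤ oeRun n n w j := by
  intro i j hij hjn
  cases hj : oeRun n n w j
  · have hall : ∀ k < j, oeRun n n w k = false := by
      rcases oe_inv n w n j hjn hj with h1 | ⟨hb, _⟩
      · exact h1
      · have hle := cnt_le (oeRun n n w) j
        have hc : cnt (oeRun n n w) j = j := by omega
        exact (cnt_eq_iff _ j).mp hc
    rw [hall i hij]
  · exact Bool.le_true _

lemma oeStep_map {α β : Type*} [LinearOrder α] [LinearOrder β] {f : α → β}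
    (hf : Monotone f) (n t : ℕ) (v : ℕ → α) :
    oeStep n t (fun i => f (v i)) = fun i => f (oeStep n t v i) := by
  funext i
  simp only [oeStep]
  split_ifs <;> simp [hf.map_min, hf.map_max]

lemma oeRun_map {α β : Type*} [LinearOrder α] [LinearOrder β] {f : α → β}
    (hf : Monotone f) (n : ℕ) (v : ℕ → α) :
    ∀ t, oeRun n t (fun i => f (v i)) = fun i => f (oeRun n t v i)
  | 0 => rfl
  | t + 1 => by
    have h1 : oeRun n (t + 1) (fun i => f (v i))
        = oeStep n t (oeRun n t (fun i => f (v i))) := rfl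
    rw [h1, oeRun_map hf n v t, oeStep_map hf]
    rfl

end OEAux


/-- the odd–even transposition network sorts: after `n` alternating
rounds, any sequence of `n` distinct values is in sorted order. -/
theorem stmt9 {α : Type*} [LinearOrder α] (n : ℕ) (v : ℕ → α)
    (hdist : ∀ i j, i < n → j < n → v i = v j → i = j) :
    ∀ i j, i < j → j < n → oeRun n n v i ≤ oeRun n n v j := by
  intro i j hij hjn
  by_contra hcon
  push_neg at hcon
  have hmono : Monotone (fun x : α => decide (oeRun n n v i ≤ x)) := by
    intro a b hab
    by_cases h : oeRun n n v i ≤ a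
    · simp [h, h.trans hab]
    · simp [h]
  have hb := OEAux.oe_sorted_bool n (fun k => decide (oeRun n n v i ≤ v k)) i j hij hjn
  rw [OEAux.oeRun_map hmono] at hb
  simp only [] at hb
  rw [decide_eq_true (le_refl (oeRun n n v i)),
    decide_eq_false (not_le.mpr hcon)] at hb
  exact absurd hb (by decide)
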